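/- Let $k, V, \mathscr{H}$ be as above, with $\delta_x \in \mathscr{H}$ for all $x$, and $A : \ell^2(V) \to \mathscr{H}$ the densely defined operator $A\delta_x = \delta_x$. Fix $x \in V$. Then $\delta_x \in \mathrm{dom}(A^*\overline{A})$ if and only if $\sum_{y \in V} |\langle \delta_x, \delta_y \rangle_{\mathscr{H}}|^2 < \infty$, i.e., the row function $y \mapsto \langle \delta_x, \delta_y\rangle_{\mathscr{H}}$ lies in $\ell^2(V)$. -/

import Mathlib

/-- Let `k` be positive definite on countable `V` with RKHS `H`
(kernel vectors `K x`, dense span) containing all point masses (`D x`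
represents `δ_x`), and `A : ℓ²(V) ⊇ span{δ_x} → H`, `A δ_x = δ_x`. For fixed
`x`, `δ_x ∈ dom (A* ∘ closure A)` — i.e. `D x ∈ dom A*`, meaning there is
`C < ∞` with `|⟨A ξ, δ_x⟩_H|² ≤ C ‖ξ‖²_{ℓ²}` for all finitely supported `ξ` —
if and only if the row function `y ↦ ⟨δ_x, δ_y⟩_H` lies in `ℓ²(V)`. -/
theorem stmt_12 {V H : Type*} [Countable V] [DecidableEq V]
    [NormedAddCommGroup H] [InnerProductSpace ℂ H] [CompleteSpace H]
    (k : V → V → ℂ) (K : V → H)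
    (hk : ∀ x y, (inner ℂ (K x) (K y) : ℂ) = k x y)
    (hdense : (Submodule.span ℂ (Set.range K)).topologicalClosure = ⊤)
    (D : V → H)
    (hD : ∀ x y, (inner ℂ (K y) (D x) : ℂ) = if y = x then 1 else 0)
    (x : V) :
    (∃ C : ℝ, ∀ ξ : V →₀ ℂ,
        ‖(inner ℂ (∑ y ∈ ξ.support, ξ y • D y) (D x) : ℂ)‖ ^ 2 ≤
          C * ∑ y ∈ ξ.support, ‖ξ y‖ ^ 2) ↔
      Summable fun y : V => ‖(inner ℂ (D x) (D y) : ℂ)‖ ^ 2 := by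
  set f : V → ℂ := fun y => inner ℂ (D y) (D x) with hf
  have hnorm : ∀ y, ‖(inner ℂ (D x) (D y) : ℂ)‖ = ‖f y‖ := by
    intro y
    exact norm_inner_symm (𝕜 := ℂ) (D x) (D y)
  have hval : ∀ ξ : V →₀ ℂ,
      (inner ℂ (∑ y ∈ ξ.support, ξ y • D y) (D x) : ℂ)
        = ∑ y ∈ ξ.support, (starRingEnd ℂ) (ξ y) * f y := by
    intro ξ
    rw [sum_inner]
    exact Finset.sum_congr rfl fun y _ => inner_smul_left _ _ _
  constructor
  · rintro ⟨C, hC⟩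
    have hC0 : (0:ℝ) ≤ max C 0 := le_max_right _ _
    have key : ∀ s : Finset V, ∑ y ∈ s, ‖f y‖ ^ 2 ≤ max C 0 := by
      intro s
      set ξ : V →₀ ℂ := Finsupp.onFinset s (fun y => if y ∈ s then f y else 0)
        (by intro y hy; by_contra h; simp [h] at hy) with hξ
      have hsupp : ξ.support ⊆ s := Finsupp.support_onFinset_subset
      have hξval : ∀ y ∈ s, ξ y = f y := by intro y hy; simp [hξ, hy]
      have hzero : ∀ y ∈ s, y ∉ ξ.support → ξ y = 0 := fun y _ hny =>
        Finsupp.notMem_support_iff.mp hny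
      have h1 : (inner ℂ (∑ y ∈ ξ.support, ξ y • D y) (D x) : ℂ)
          = ((∑ y ∈ s, ‖f y‖ ^ 2 : ℝ) : ℂ) := by
        rw [hval ξ, Finset.sum_subset hsupp (by intro y hy hny; simp [hzero y hy hny])]
        push_cast
        refine Finset.sum_congr rfl fun y hy => ?_
        rw [hξval y hy, RCLike.conj_mul]
        norm_cast
      have h2 : ∑ y ∈ ξ.support, ‖ξ y‖ ^ 2 = ∑ y ∈ s, ‖f y‖ ^ 2 := by
        rw [Finset.sum_subset hsupp (by intro y hy hny; simp [hzero y hy hny])]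
        exact Finset.sum_congr rfl fun y hy => by rw [hξval y hy]
      have h3 := hC ξ
      rw [h1, h2] at h3
      set T := ∑ y ∈ s, ‖f y‖ ^ 2 with hT
      have hT0 : 0 ≤ T := Finset.sum_nonneg fun y _ => sq_nonneg _
      have h4 : T ^ 2 ≤ C * T := by
        rwa [Complex.norm_real, Real.norm_eq_abs, abs_of_nonneg hT0] at h3
      rcases eq_or_lt_of_le hT0 with h | h
      · rw [← h]; exact hC0
      · have : T ≤ C := by nlinarith
        exact this.trans (le_max_left _ _)
    have : Summable fun y => ‖f y‖ ^ 2 :=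
      summable_of_sum_le (fun y => sq_nonneg _) key
    exact this.congr fun y => by rw [hnorm y]
  · intro hsum
    have hsum' : Summable fun y => ‖f y‖ ^ 2 := hsum.congr fun y => by rw [hnorm y]
    refine ⟨∑' y, ‖f y‖ ^ 2, fun ξ => ?_⟩
    rw [hval ξ]
    have step1 : ‖∑ y ∈ ξ.support, (starRingEnd ℂ) (ξ y) * f y‖
        ≤ ∑ y ∈ ξ.support, ‖ξ y‖ * ‖f y‖ := by
      refine (norm_sum_le _ _).trans (le_of_eq ?_)
      exact Finset.sum_congr rfl fun y _ => by rw [norm_mul, RCLike.norm_conj]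
    calc ‖∑ y ∈ ξ.support, (starRingEnd ℂ) (ξ y) * f y‖ ^ 2
        ≤ (∑ y ∈ ξ.support, ‖ξ y‖ * ‖f y‖) ^ 2 :=
          pow_le_pow_left₀ (norm_nonneg _) step1 2
      _ ≤ (∑ y ∈ ξ.support, ‖ξ y‖ ^ 2) * ∑ y ∈ ξ.support, ‖f y‖ ^ 2 :=
          Finset.sum_mul_sq_le_sq_mul_sq _ _ _
      _ = (∑ y ∈ ξ.support, ‖f y‖ ^ 2) * ∑ y ∈ ξ.support, ‖ξ y‖ ^ 2 := mul_comm _ _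
      _ ≤ (∑' y, ‖f y‖ ^ 2) * ∑ y ∈ ξ.support, ‖ξ y‖ ^ 2 :=
          mul_le_mul_of_nonneg_right
            (Summable.sum_le_tsum _ (fun y _ => sq_nonneg _) hsum')
            (Finset.sum_nonneg fun y _ => sq_nonneg _)
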